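/- Let n ≥ 4, N ≥ n, ε > 0, and x ∈ Δ^N with x(1) ≤ ε. For every partition π of [n] containing at least two non-singleton blocks, κ^N_n(x, π) ≤ κ^N_2(x, {{1,2}})·(Nε − 1)/(N − 3). -/

import Mathlib

open scoped Classical

lemma descFactorial_add' (m a b : ℕ) :
    m.descFactorial (a + b) = m.descFactorial a * (m - a).descFactorial b := by
  induction b with
  | zero => simp
  | succ b ih =>
      rw [← Nat.add_assoc, Nat.descFactorial_succ, ih, Nat.descFactorial_succ, Nat.sub_sub]
      ring

lemma card_filter_prod {α β : Type*} [Fintype α] [Fintype β] (p : α → Prop) (q : α → β → Prop)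
    [DecidablePred p] [∀ a, DecidablePred (q a)]
    [DecidablePred fun z : α × β => p z.1 ∧ q z.1 z.2] :
    (Finset.univ.filter fun z : α × β => p z.1 ∧ q z.1 z.2).card
      = ∑ a ∈ Finset.univ.filter p, (Finset.univ.filter (q a)).card := by
  rw [Finset.card_filter, Fintype.sum_prod_type, Finset.sum_filter]
  refine Finset.sum_congr rfl fun a _ => ?_
  by_cases hpa : p a
  · rw [Finset.card_filter, if_pos hpa]
    exact Finset.sum_congr rfl fun b _ => by simp [hpa]
  · simp [hpa]

lemma fiber_card_le {n N : ℕ} {i j k l : Fin n} {a b p q : Fin N}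
    (hij : i ≠ j) (hik : i ≠ k) (hil : i ≠ l) (hjk : j ≠ k) (hjl : j ≠ l) (hkl : k ≠ l)
    (hab : a ≠ b) (hap : a ≠ p) (haq : a ≠ q) (hbp : b ≠ p) (hbq : b ≠ q) (hpq : p ≠ q) :
    (Finset.univ.filter fun f : Fin n ↪ Fin N => f i = a ∧ f j = b ∧ f k = p ∧ f l = q).card
      ≤ (N - 4).descFactorial (n - 4) := by
  set s : Finset (Fin n) := {i, j, k, l} with hs
  set t : Finset (Fin N) := {a, b, p, q} with ht
  have hscard : s.card = 4 := by
    rw [hs, Finset.card_insert_of_notMem (by simp [hij, hik, hil]),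
      Finset.card_insert_of_notMem (by simp [hjk, hjl]),
      Finset.card_insert_of_notMem (by simp [hkl]), Finset.card_singleton]
  have htcard : t.card = 4 := by
    rw [ht, Finset.card_insert_of_notMem (by simp [hab, hap, haq]),
      Finset.card_insert_of_notMem (by simp [hbp, hbq]),
      Finset.card_insert_of_notMem (by simp [hpq]), Finset.card_singleton]
  set F := (Finset.univ.filter fun f : Fin n ↪ Fin N =>
      f i = a ∧ f j = b ∧ f k = p ∧ f l = q) with hF
  have key : ∀ f : Fin n ↪ Fin N, f ∈ F → ∀ m : Fin n, m ∈ sᶜ → f m ∈ tᶜ := by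
    intro f hf m hm
    simp only [hF, Finset.mem_filter] at hf
    obtain ⟨-, h1, h2, h3, h4⟩ := hf
    rw [Finset.mem_compl, hs] at hm
    simp only [Finset.mem_insert, Finset.mem_singleton, not_or] at hm
    rw [Finset.mem_compl, ht]
    simp only [Finset.mem_insert, Finset.mem_singleton, not_or]
    refine ⟨?_, ?_, ?_, ?_⟩
    · intro h; exact hm.1 (f.injective (h.trans h1.symm))
    · intro h; exact hm.2.1 (f.injective (h.trans h2.symm))
    · intro h; exact hm.2.2.1 (f.injective (h.trans h3.symm))
    · intro h; exact hm.2.2.2 (f.injective (h.trans h4.symm))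
  have hfc : F.card = Fintype.card {f // f ∈ F} := (Fintype.card_coe F).symm
  rw [hfc]
  have hΦ : ∃ Φ : {f // f ∈ F} → (↥(sᶜ) ↪ ↥(tᶜ)), Function.Injective Φ := by
    refine ⟨fun g => ⟨fun m => ⟨g.1 m.1, key g.1 g.2 m.1 m.2⟩,
      fun m1 m2 h => Subtype.ext (g.1.injective (congrArg Subtype.val h))⟩, ?_⟩
    intro g1 g2 h
    apply Subtype.ext
    apply Function.Embedding.ext
    intro m
    by_cases hm : m ∈ s
    · have hg1 := g1.2
      have hg2 := g2.2
      simp only [hF, Finset.mem_filter] at hg1 hg2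
      simp only [hs] at hm
      simp only [Finset.mem_insert, Finset.mem_singleton] at hm
      rcases hm with rfl | rfl | rfl | rfl
      · rw [hg1.2.1, hg2.2.1]
      · rw [hg1.2.2.1, hg2.2.2.1]
      · rw [hg1.2.2.2.1, hg2.2.2.2.1]
      · rw [hg1.2.2.2.2, hg2.2.2.2.2]
    · exact congrArg (fun e => ((e ⟨m, Finset.mem_compl.mpr hm⟩ : ↥tᶜ) : Fin N)) h
  obtain ⟨Φ, hΦinj⟩ := hΦ
  calc Fintype.card {f // f ∈ F} ≤ Fintype.card (↥(sᶜ) ↪ ↥(tᶜ)) :=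
        Fintype.card_le_of_injective Φ hΦinj
    _ = (N - 4).descFactorial (n - 4) := by
        rw [Fintype.card_embedding_eq, Fintype.card_coe, Fintype.card_coe,
          Finset.card_compl, Finset.card_compl, Fintype.card_fin, Fintype.card_fin,
          hscard, htcard]

lemma card_two (N : ℕ) (c : Fin N → ℕ) :
    (Finset.univ.filter fun f : Fin 2 ↪ Fin N =>
        ∀ i j : Fin 2, True ↔ c (f i) = c (f j)).card
      = (Finset.univ.filter fun ab : Fin N × Fin N =>
          ab.1 ≠ ab.2 ∧ c ab.1 = c ab.2).card := by
  apply Finset.card_bij' (fun f _ => (f 0, f 1))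
    (fun ab hab => ⟨fun t => if t = 0 then ab.1 else ab.2, by
      have h1 : ab.1 ≠ ab.2 := (Finset.mem_filter.mp hab).2.1
      intro t1 t2 h
      fin_cases t1 <;> fin_cases t2 <;> simp_all⟩)
  · intro f hf
    apply Function.Embedding.ext
    intro t
    fin_cases t <;> simp
  · intro ab hab
    rfl
  · intro f hf
    rw [Finset.mem_filter] at hf ⊢
    refine ⟨Finset.mem_univ _, f.injective.ne (by decide), (hf.2 0 1).mp trivial⟩
  · intro ab hab
    rw [Finset.mem_filter] at hab ⊢
    refine ⟨Finset.mem_univ _, ?_⟩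
    intro i j
    have h2 : c ab.1 = c ab.2 := hab.2.2
    refine ⟨fun _ => ?_, fun _ => trivial⟩
    fin_cases i <;> fin_cases j <;> simp <;>
      first | rfl | exact h2 | exact h2.symm

open scoped Classical in
/-- Urn-without-replacement partition kernel. -/
noncomputable def urnKernel (N n : ℕ) (c : Fin N → ℕ) (P : Fin n → Fin n → Prop) : ℝ :=
  ((Finset.univ.filter fun f : Fin n ↪ Fin N =>
      ∀ i j, P i j ↔ c (f i) = c (f j)).card : ℝ) /
    (Fintype.card (Fin n ↪ Fin N) : ℝ)

/-- For `x ∈ Δ^N` with all family sizes at most `εN` and a partition `π` of `[n]`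
with at least two non-singleton blocks,
`κ^N_n(x,π) ≤ κ^N_2(x,{{1,2}})·(Nε − 1)/(N − 3)`. -/
theorem stmt11 (N n : ℕ) (hn : 4 ≤ n) (hN : n ≤ N)
    (ε : ℝ) (hε : 0 < ε)
    (x : ℕ → ℝ)
    (hx0 : ∀ i, 0 ≤ x i) (hxa : Antitone x) (hxs : Summable x) (hx1 : ∑' i, x i = 1)
    (hxN : ∀ i, ∃ m : ℕ, (N : ℝ) * x i = m)
    (hxε : x 0 ≤ ε)
    (c : Fin N → ℕ)
    (hc : ∀ ℓ, ((Finset.univ.filter fun a => c a = ℓ).card : ℝ) = (N : ℝ) * x ℓ)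
    (P : Fin n → Fin n → Prop) (hP : Equivalence P)
    (hblocks : ∃ i j k l : Fin n, i ≠ j ∧ k ≠ l ∧ P i j ∧ P k l ∧ ¬ P i k) :
    urnKernel N n c P ≤
      urnKernel N 2 c (fun _ _ => True) * (((N : ℝ) * ε - 1) / ((N : ℝ) - 3)) := by
  classical
  obtain ⟨i, j, k, l, hij, hkl, hPij, hPkl, hnPik⟩ := hblocks
  have hik : i ≠ k := by rintro rfl; exact hnPik (hP.refl i)
  have hjk : j ≠ k := by rintro rfl; exact hnPik hPij
  have hil : i ≠ l := by rintro rfl; exact hnPik (hP.symm hPkl)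
  have hjl : j ≠ l := by rintro rfl; exact hnPik (hP.trans hPij (hP.symm hPkl))
  have hN4 : 4 ≤ N := le_trans hn hN
  have hN4' : (4:ℝ) ≤ (N:ℝ) := by exact_mod_cast hN4
  have hsize : ∀ ℓ : ℕ, ((Finset.univ.filter fun a => c a = ℓ).card : ℝ) ≤ (N:ℝ) * ε := by
    intro ℓ
    rw [hc ℓ]
    calc (N:ℝ) * x ℓ ≤ (N:ℝ) * x 0 :=
          mul_le_mul_of_nonneg_left (hxa (Nat.zero_le ℓ)) (Nat.cast_nonneg N)
      _ ≤ (N:ℝ) * ε := mul_le_mul_of_nonneg_left hxε (Nat.cast_nonneg N)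
  -- rewrite the two kernels
  have hN1 : 1 ≤ N := by omega
  have hk2 : urnKernel N 2 c (fun _ _ => True)
      = ((Finset.univ.filter fun ab : Fin N × Fin N =>
          ab.1 ≠ ab.2 ∧ c ab.1 = c ab.2).card : ℝ) / ((N:ℝ) * ((N:ℝ) - 1)) := by
    unfold urnKernel
    rw [Fintype.card_embedding_eq, Fintype.card_fin, Fintype.card_fin]
    congr 1
    · rw [Nat.cast_inj]
      convert card_two N c using 2
      ext f
      simp
    · rw [Nat.descFactorial_succ, Nat.descFactorial_one]
      push_cast [Nat.cast_sub hN1]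
      ring
  have hkn : urnKernel N n c P
      = ((Finset.univ.filter (fun f : Fin n ↪ Fin N =>
          ∀ i' j', P i' j' ↔ c (f i') = c (f j'))).card : ℝ) / (N.descFactorial n : ℝ) := by
    unfold urnKernel
    rw [Fintype.card_embedding_eq, Fintype.card_fin, Fintype.card_fin]
  rw [hkn, hk2]
  set A := Finset.univ.filter (fun f : Fin n ↪ Fin N =>
      ∀ i' j', P i' j' ↔ c (f i') = c (f j')) with hA
  set B := Finset.univ.filter (fun ab : Fin N × Fin N =>
      ab.1 ≠ ab.2 ∧ c ab.1 = c ab.2) with hB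
  set M := (N - 4).descFactorial (n - 4) with hM
  -- every pair in B lies in a family of size ≥ 2
  have hBsize : ∀ ab ∈ B, (2:ℝ) ≤ ((Finset.univ.filter fun a => c a = c ab.1).card : ℝ) := by
    intro ab hab
    rw [hB, Finset.mem_filter] at hab
    have hsub : ({ab.1, ab.2} : Finset (Fin N)) ⊆ Finset.univ.filter fun a => c a = c ab.1 := by
      intro z hz
      simp only [Finset.mem_insert, Finset.mem_singleton] at hz
      rcases hz with rfl | rfl
      · simp
      · simp [hab.2.2.symm]
    have h2 : ({ab.1, ab.2} : Finset (Fin N)).card = 2 := by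
      rw [Finset.card_insert_of_notMem (by simp [hab.2.1]), Finset.card_singleton]
    have hle := Finset.card_le_card hsub
    rw [h2] at hle
    exact_mod_cast hle
  -- inner bound
  have hinner : ∀ ab ∈ B, ((Finset.univ.filter fun pq : Fin N × Fin N =>
      pq.1 ≠ pq.2 ∧ c pq.1 = c pq.2 ∧ c pq.1 ≠ c ab.1).card : ℝ)
        ≤ ((N:ℝ) * ε - 1) * ((N:ℝ) - 2) := by
    intro ab hab
    have hEq : (Finset.univ.filter fun pq : Fin N × Fin N =>
        pq.1 ≠ pq.2 ∧ c pq.1 = c pq.2 ∧ c pq.1 ≠ c ab.1)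
        = (Finset.univ.filter fun pq : Fin N × Fin N =>
          (¬ c pq.1 = c ab.1) ∧ (pq.2 ≠ pq.1 ∧ c pq.2 = c pq.1)) := by
      ext z
      simp only [Finset.mem_filter, Finset.mem_univ, true_and]
      constructor
      · rintro ⟨h1, h2, h3⟩; exact ⟨h3, Ne.symm h1, h2.symm⟩
      · rintro ⟨h3, h1, h2⟩; exact ⟨Ne.symm h1, h2.symm, h3⟩
    rw [hEq, card_filter_prod (fun p : Fin N => ¬ c p = c ab.1)
      (fun p q' => q' ≠ p ∧ c q' = c p)]
    -- bound each inner family count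
    have hQ1 : ∀ p : Fin N, ((Finset.univ.filter fun q' : Fin N => q' ≠ p ∧ c q' = c p).card : ℝ)
        ≤ (N:ℝ) * ε - 1 := by
      intro p
      have he : (Finset.univ.filter fun q' : Fin N => q' ≠ p ∧ c q' = c p)
          = (Finset.univ.filter fun q' : Fin N => c q' = c p).erase p := by
        ext q'
        simp only [Finset.mem_filter, Finset.mem_erase, Finset.mem_univ, true_and, and_comm]
      have hpmem : p ∈ Finset.univ.filter fun q' : Fin N => c q' = c p := by simp
      have hpos : 1 ≤ (Finset.univ.filter fun q' : Fin N => c q' = c p).card :=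
        Finset.card_pos.mpr ⟨p, hpmem⟩
      rw [he, Finset.card_erase_of_mem hpmem, Nat.cast_sub hpos, Nat.cast_one]
      have := hsize (c p)
      linarith
    -- bound the number of outer points
    have hP2 : ((Finset.univ.filter fun p : Fin N => ¬ c p = c ab.1).card : ℝ) ≤ (N:ℝ) - 2 := by
      have hsplit := Finset.card_filter_add_card_filter_not
        (s := (Finset.univ : Finset (Fin N))) (p := fun p : Fin N => c p = c ab.1)
      rw [Finset.card_univ, Fintype.card_fin] at hsplit
      have h2 := hBsize ab hab
      have hcast : ((Finset.univ.filter fun p : Fin N => c p = c ab.1).card : ℝ)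
          + ((Finset.univ.filter fun p : Fin N => ¬ c p = c ab.1).card : ℝ) = (N:ℝ) := by
        exact_mod_cast congrArg (Nat.cast : ℕ → ℝ) hsplit
      linarith
    have hNε2 : (2:ℝ) ≤ (N:ℝ) * ε := le_trans (hBsize ab hab) (hsize (c ab.1))
    calc ((∑ p ∈ Finset.univ.filter fun p : Fin N => ¬ c p = c ab.1,
            (Finset.univ.filter fun q' : Fin N => q' ≠ p ∧ c q' = c p).card : ℕ) : ℝ)
        = ∑ p ∈ Finset.univ.filter fun p : Fin N => ¬ c p = c ab.1,
            ((Finset.univ.filter fun q' : Fin N => q' ≠ p ∧ c q' = c p).card : ℝ) := by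
          push_cast; ring
      _ ≤ ∑ p ∈ Finset.univ.filter fun p : Fin N => ¬ c p = c ab.1, ((N:ℝ) * ε - 1) :=
          Finset.sum_le_sum fun p _ => hQ1 p
      _ = ((Finset.univ.filter fun p : Fin N => ¬ c p = c ab.1).card : ℝ) * ((N:ℝ) * ε - 1) := by
          rw [Finset.sum_const, nsmul_eq_mul]
      _ ≤ ((N:ℝ) - 2) * ((N:ℝ) * ε - 1) :=
          mul_le_mul_of_nonneg_right hP2 (by linarith)
      _ = ((N:ℝ) * ε - 1) * ((N:ℝ) - 2) := by ring
  -- the quadruple map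
  have hstep1 : A.card ≤ M * (A.image (fun f : Fin n ↪ Fin N => ((f i, f j), (f k, f l)))).card := by
    apply Finset.card_le_mul_card_image
    intro z hz
    obtain ⟨f0, hf0A, hf0z⟩ := Finset.mem_image.mp hz
    have hsub : (A.filter fun g => ((g i, g j), (g k, g l)) = z)
        ⊆ Finset.univ.filter fun g : Fin n ↪ Fin N =>
          g i = f0 i ∧ g j = f0 j ∧ g k = f0 k ∧ g l = f0 l := by
      intro g hg
      rw [Finset.mem_filter] at hg
      have hzz := hg.2.trans hf0z.symm
      simp only [Prod.mk.injEq] at hzz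
      exact Finset.mem_filter.mpr ⟨Finset.mem_univ _, hzz.1.1, hzz.1.2, hzz.2.1, hzz.2.2⟩
    exact le_trans (Finset.card_le_card hsub)
      (fiber_card_le hij hik hil hjk hjl hkl (f0.injective.ne hij) (f0.injective.ne hik)
        (f0.injective.ne hil) (f0.injective.ne hjk) (f0.injective.ne hjl) (f0.injective.ne hkl))
  -- image lands in Q
  have hstep2 : (A.image (fun f : Fin n ↪ Fin N => ((f i, f j), (f k, f l))))
      ⊆ Finset.univ.filter (fun z : (Fin N × Fin N) × (Fin N × Fin N) =>
        (z.1.1 ≠ z.1.2 ∧ c z.1.1 = c z.1.2)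
          ∧ (z.2.1 ≠ z.2.2 ∧ c z.2.1 = c z.2.2 ∧ c z.2.1 ≠ c z.1.1)) := by
    intro z hz
    obtain ⟨f, hfA, rfl⟩ := Finset.mem_image.mp hz
    rw [hA, Finset.mem_filter] at hfA
    have hf := hfA.2
    refine Finset.mem_filter.mpr ⟨Finset.mem_univ _,
      ⟨f.injective.ne hij, (hf i j).mp hPij⟩,
      f.injective.ne hkl, (hf k l).mp hPkl, fun h => hnPik ((hf i k).mpr h.symm)⟩
  -- decompose Q
  have hstep3 : (Finset.univ.filter (fun z : (Fin N × Fin N) × (Fin N × Fin N) =>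
      (z.1.1 ≠ z.1.2 ∧ c z.1.1 = c z.1.2)
        ∧ (z.2.1 ≠ z.2.2 ∧ c z.2.1 = c z.2.2 ∧ c z.2.1 ≠ c z.1.1))).card
      = ∑ ab ∈ B, (Finset.univ.filter fun pq : Fin N × Fin N =>
          pq.1 ≠ pq.2 ∧ c pq.1 = c pq.2 ∧ c pq.1 ≠ c ab.1).card := by
    rw [hB]
    exact card_filter_prod (fun ab : Fin N × Fin N => ab.1 ≠ ab.2 ∧ c ab.1 = c ab.2)
      (fun (ab pq : Fin N × Fin N) => pq.1 ≠ pq.2 ∧ c pq.1 = c pq.2 ∧ c pq.1 ≠ c ab.1)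
  -- the key bound
  have hkey : (A.card : ℝ) ≤ (M : ℝ) * (B.card : ℝ) * (((N:ℝ) * ε - 1) * ((N:ℝ) - 2)) := by
    have h1 : (A.card : ℝ) ≤ (M : ℝ) *
        ((Finset.univ.filter (fun z : (Fin N × Fin N) × (Fin N × Fin N) =>
          (z.1.1 ≠ z.1.2 ∧ c z.1.1 = c z.1.2)
            ∧ (z.2.1 ≠ z.2.2 ∧ c z.2.1 = c z.2.2 ∧ c z.2.1 ≠ c z.1.1))).card : ℝ) := by
      have := le_trans hstep1 (Nat.mul_le_mul_left M (Finset.card_le_card hstep2))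
      exact_mod_cast this
    rw [hstep3] at h1
    have h2 := Finset.sum_le_sum hinner
    rw [Finset.sum_const, nsmul_eq_mul] at h2
    calc (A.card : ℝ) ≤ _ := h1
      _ = (M : ℝ) * ∑ ab ∈ B, ((Finset.univ.filter fun pq : Fin N × Fin N =>
            pq.1 ≠ pq.2 ∧ c pq.1 = c pq.2 ∧ c pq.1 ≠ c ab.1).card : ℝ) := by
          push_cast; ring
      _ ≤ (M : ℝ) * ((B.card : ℝ) * (((N:ℝ) * ε - 1) * ((N:ℝ) - 2))) :=
          mul_le_mul_of_nonneg_left h2 (Nat.cast_nonneg M)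
      _ = (M : ℝ) * (B.card : ℝ) * (((N:ℝ) * ε - 1) * ((N:ℝ) - 2)) := by ring
  -- descFactorial computations
  have hc1 : ((N - 1 : ℕ) : ℝ) = (N:ℝ) - 1 := by
    rw [Nat.cast_sub (by omega), Nat.cast_one]
  have hc2 : ((N - 2 : ℕ) : ℝ) = (N:ℝ) - 2 := by
    rw [Nat.cast_sub (by omega)]; norm_num
  have hc3 : ((N - 3 : ℕ) : ℝ) = (N:ℝ) - 3 := by
    rw [Nat.cast_sub (by omega)]; norm_num
  have hdescn : ((N.descFactorial n : ℕ) : ℝ)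
      = (N:ℝ) * ((N:ℝ) - 1) * ((N:ℝ) - 2) * ((N:ℝ) - 3) * (M:ℝ) := by
    have hsplit : N.descFactorial n = N.descFactorial 4 * M := by
      rw [hM]
      conv_lhs => rw [show n = 4 + (n - 4) by omega]
      exact descFactorial_add' N 4 (n - 4)
    have h4 : N.descFactorial 4 = (N - 3) * ((N - 2) * ((N - 1) * N)) := by
      simp [Nat.descFactorial_succ, Nat.descFactorial_zero]
    rw [hsplit, h4]
    push_cast [hc1, hc2, hc3]
    ring
  rw [hdescn]
  -- positivity facts
  have hr0 : (0:ℝ) < (N:ℝ) := by linarith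
  have hr1 : (0:ℝ) < (N:ℝ) - 1 := by linarith
  have hr2 : (0:ℝ) < (N:ℝ) - 2 := by linarith
  have hr3 : (0:ℝ) < (N:ℝ) - 3 := by linarith
  have hMpos : 0 < M := by
    rw [hM]
    exact Nat.pos_of_ne_zero fun h =>
      absurd (Nat.descFactorial_eq_zero_iff_lt.mp h) (by omega)
  have hMr : (0:ℝ) < (M:ℝ) := by exact_mod_cast hMpos
  rw [div_mul_div_comm, div_le_div_iff₀
    (by positivity) (by positivity)]
  calc (A.card : ℝ) * ((N:ℝ) * ((N:ℝ) - 1) * ((N:ℝ) - 3))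
      ≤ ((M : ℝ) * (B.card : ℝ) * (((N:ℝ) * ε - 1) * ((N:ℝ) - 2)))
          * ((N:ℝ) * ((N:ℝ) - 1) * ((N:ℝ) - 3)) :=
        mul_le_mul_of_nonneg_right hkey (by positivity)
    _ = (B.card : ℝ) * ((N:ℝ) * ε - 1)
          * ((N:ℝ) * ((N:ℝ) - 1) * ((N:ℝ) - 2) * ((N:ℝ) - 3) * (M:ℝ)) := by ring
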